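/- For a simple graph G of order n, th_-(G) = n − 1 if and only if G is a cograph (i.e., G has no induced subgraph isomorphic to the path P_4) that has no induced subgraph isomorphic to 2K_2 and has at least one edge. -/
import Mathlib


open SimpleGraph

/-- One round of skew zero forcing: every vertex (blue or white) with exactly one
white neighbor colors that neighbor blue. -/
def skewStep {V : Type*} (G : SimpleGraph V) (B : Set V) : Set V :=
  B ∪ {w | ∃ v, G.Adj v w ∧ ∀ u, G.Adj v u → u ∉ B → u = w}

/-- The set of blue vertices after `n` rounds of skew zero forcing starting from `S`. -/
def skewIter {V : Type*} (G : SimpleGraph V) (S : Set V) : ℕ → Set V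
  | 0 => S
  | n + 1 => skewStep G (skewIter G S n)

/-- `S` is a skew zero forcing set of `G`. -/
def IsSkewZFS {V : Type*} (G : SimpleGraph V) (S : Set V) : Prop :=
  ∃ n, skewIter G S n = Set.univ

/-- The skew propagation time `pt₋(G;S)`: the number of rounds needed for all
vertices to become blue. -/
noncomputable def skewPt {V : Type*} (G : SimpleGraph V) (S : Set V) : ℕ :=
  sInf {n | skewIter G S n = Set.univ}

/-- The skew throttling number `th₋(G)`. -/
noncomputable def skewTh {V : Type*} (G : SimpleGraph V) : ℕ :=
  sInf {m | ∃ S : Set V, IsSkewZFS G S ∧ m = S.ncard + skewPt G S}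

/-- The skew throttling number over sets of size `k`, `th₋(G,k)`. -/
noncomputable def skewThK {V : Type*} (G : SimpleGraph V) (k : ℕ) : ℕ :=
  sInf {m | ∃ S : Set V, IsSkewZFS G S ∧ S.ncard = k ∧ m = S.ncard + skewPt G S}

/-- The skew zero forcing number `Z₋(G)`. -/
noncomputable def skewZ {V : Type*} (G : SimpleGraph V) : ℕ :=
  sInf {m | ∃ S : Set V, IsSkewZFS G S ∧ m = S.ncard}

/-- The skew propagation time `pt₋(G)`: minimum propagation time over minimum
skew zero forcing sets. -/
noncomputable def skewPtMin {V : Type*} (G : SimpleGraph V) : ℕ :=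
  sInf {m | ∃ S : Set V, IsSkewZFS G S ∧ S.ncard = skewZ G ∧ m = skewPt G S}

/-- `rK₂`: the disjoint union of `r` copies of `K₂`. -/
def rK2 (r : ℕ) : SimpleGraph (Fin r × Fin 2) :=
  SimpleGraph.fromRel (fun a b => a.1 = b.1)

/-- Disjoint union of two simple graphs. -/
def disjUnion {α β : Type*} (G : SimpleGraph α) (H : SimpleGraph β) :
    SimpleGraph (α ⊕ β) :=
  SimpleGraph.fromRel (fun x y =>
    match x, y with
    | Sum.inl a, Sum.inl b => G.Adj a b
    | Sum.inr a, Sum.inr b => H.Adj a b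
    | _, _ => False)

/-- The corona `G ∘ K₁`: attach a pendant leaf to every vertex of `G`. -/
def coronaK1 {α : Type*} (G : SimpleGraph α) : SimpleGraph (α ⊕ α) :=
  SimpleGraph.fromRel (fun x y =>
    match x, y with
    | Sum.inl a, Sum.inl b => G.Adj a b
    | Sum.inl a, Sum.inr b => a = b
    | _, _ => False)

/-- The corona `G ∘ K₂`: attach a private copy of `K₂` (a triangle) to every
vertex of `G`. -/
def coronaK2 {α : Type*} (G : SimpleGraph α) : SimpleGraph (α ⊕ α × Fin 2) :=
  SimpleGraph.fromRel (fun x y =>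
    match x, y with
    | Sum.inl a, Sum.inl b => G.Adj a b
    | Sum.inl a, Sum.inr b => a = b.1
    | Sum.inr a, Sum.inr b => a.1 = b.1
    | _, _ => False)

/-- The graph `H(s,t)` with hub `b`, pendant paths `b xᵢ yᵢ` and triangles `b zᵢ wᵢ`. -/
def Hgraph (s t : ℕ) : SimpleGraph (Unit ⊕ ((Fin s × Fin 2) ⊕ (Fin t × Fin 2))) :=
  SimpleGraph.fromRel (fun x y =>
    match x, y with
    | Sum.inl _, Sum.inr (Sum.inl p) => p.2 = 0
    | Sum.inl _, Sum.inr (Sum.inr _) => True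
    | Sum.inr (Sum.inl p), Sum.inr (Sum.inl q) => p.1 = q.1
    | Sum.inr (Sum.inr p), Sum.inr (Sum.inr q) => p.1 = q.1
    | _, _ => False)

/-- The friendship graph `Fₙ`: a universal vertex joined to `n` disjoint copies of `K₂`. -/
def friendshipGraph (n : ℕ) : SimpleGraph (Unit ⊕ (Fin n × Fin 2)) :=
  SimpleGraph.fromRel (fun x y =>
    match x, y with
    | Sum.inl _, Sum.inr _ => True
    | Sum.inr p, Sum.inr q => p.1 = q.1
    | _, _ => False)

/-- The balanced spider `T_{p,ℓ}`: a center with `p` legs of `ℓ` vertices each. -/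
def spider (p ℓ : ℕ) : SimpleGraph (Unit ⊕ (Fin p × Fin ℓ)) :=
  SimpleGraph.fromRel (fun x y =>
    match x, y with
    | Sum.inl _, Sum.inr q => q.2.val = 0
    | Sum.inr q, Sum.inr q' => q.1 = q'.1 ∧ q'.2.val = q.2.val + 1
    | _, _ => False)

/-- The hypercube graph `Qₙ`: binary strings of length `n`, adjacent iff they
differ in exactly one coordinate. -/
def hypercube (n : ℕ) : SimpleGraph (Fin n → Bool) :=
  SimpleGraph.fromRel (fun x y => ∃! i, x i ≠ y i)
section Aux

variable {V : Type*} {G : SimpleGraph V} {B C S : Set V}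

lemma subset_skewStep (G : SimpleGraph V) (B : Set V) : B ⊆ skewStep G B :=
  Set.subset_union_left

lemma skewStep_mono (G : SimpleGraph V) (h : B ⊆ C) : skewStep G B ⊆ skewStep G C := by
  intro x hx
  rcases hx with hx | ⟨v, hv, hcond⟩
  · exact Or.inl (h hx)
  · exact Or.inr ⟨v, hv, fun u hu huC => hcond u hu (fun hB => huC (h hB))⟩

lemma skewIter_succ_supset (G : SimpleGraph V) (S : Set V) (i : ℕ) :
    skewIter G S i ⊆ skewIter G S (i + 1) :=
  subset_skewStep G _

lemma skewIter_mono (G : SimpleGraph V) (S : Set V) {i j : ℕ} (h : i ≤ j) :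
    skewIter G S i ⊆ skewIter G S j := by
  induction j with
  | zero => simp_all
  | succ j ih =>
    rcases Nat.lt_or_ge i (j+1) with hlt | hge
    · exact (ih (Nat.lt_succ_iff.mp hlt)).trans (skewIter_succ_supset G S j)
    · have : i = j + 1 := le_antisymm h hge
      subst this; exact subset_rfl

lemma skewIter_stab (G : SimpleGraph V) (S : Set V) {i : ℕ}
    (h : skewIter G S (i+1) = skewIter G S i) :
    ∀ j, i ≤ j → skewIter G S j = skewIter G S i := by
  intro j hj
  induction j with
  | zero => simp_all
  | succ j ih =>
    rcases Nat.lt_or_ge i (j+1) with hlt | hge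
    · have hij : i ≤ j := Nat.lt_succ_iff.mp hlt
      have : skewIter G S (j+1) = skewStep G (skewIter G S j) := rfl
      rw [this, ih hij]
      exact h
    · have : i = j + 1 := le_antisymm hj hge
      simp [this]

/-- `v` forces `w` with respect to blue set `B`. -/
def Forces (G : SimpleGraph V) (B : Set V) (v w : V) : Prop :=
  G.Adj v w ∧ ∀ x, G.Adj v x → x ∉ B → x = w

lemma forces_of_mem_skewStep {w : V} (hw : w ∈ skewStep G B) (hwB : w ∉ B) :
    ∃ v, Forces G B v w := by
  rcases hw with hw | ⟨v, hv, hcond⟩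
  · exact absurd hw hwB
  · exact ⟨v, hv, hcond⟩

end Aux
section Builders

variable {V : Type*} {G : SimpleGraph V}

lemma mkP4 {a b c d : V} (hab : G.Adj a b) (hbc : G.Adj b c) (hcd : G.Adj c d)
    (hac : ¬ G.Adj a c) (had : ¬ G.Adj a d) (hbd : ¬ G.Adj b d)
    (nac : a ≠ c) (nad : a ≠ d) (nbd : b ≠ d) :
    Nonempty (SimpleGraph.pathGraph 4 ↪g G) := by
  let f : Fin 4 → V := ![a, b, c, d]
  have hinj : Function.Injective f := by
    intro x y hxy
    fin_cases x <;> fin_cases y <;>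
      simp_all [f, hab.ne, hbc.ne, hcd.ne, hab.ne', hbc.ne', hcd.ne', nac, nad, nbd,
        nac.symm, nad.symm, nbd.symm]
  refine ⟨⟨⟨f, hinj⟩, ?_⟩⟩
  intro x y
  fin_cases x <;> fin_cases y <;>
    simp [f, SimpleGraph.pathGraph_adj, Fin.ext_iff, hab, hbc, hcd, hac, had, hbd, hab.symm,
      hbc.symm, hcd.symm, G.irrefl] <;>
    first
      | decide
      | exact fun h => hac h.symm
      | exact fun h => had h.symm
      | exact fun h => hbd h.symm
      | exact iff_of_false (fun h => hac h.symm) (by decide)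
      | exact iff_of_false (fun h => had h.symm) (by decide)
      | exact iff_of_false (fun h => hbd h.symm) (by decide)
      | skip

lemma mk2K2 {a b c d : V} (hab : G.Adj a b) (hcd : G.Adj c d)
    (hac : ¬ G.Adj a c) (had : ¬ G.Adj a d) (hbc : ¬ G.Adj b c) (hbd : ¬ G.Adj b d)
    (nac : a ≠ c) (nad : a ≠ d) (nbc : b ≠ c) (nbd : b ≠ d) :
    Nonempty (rK2 2 ↪g G) := by
  let f : Fin 2 × Fin 2 → V := fun p => ![![a, b], ![c, d]] p.1 p.2
  have hinj : Function.Injective f := by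
    rintro ⟨x1, x2⟩ ⟨y1, y2⟩ hxy
    fin_cases x1 <;> fin_cases x2 <;> fin_cases y1 <;> fin_cases y2 <;>
      simp_all [f, hab.ne, hcd.ne, hab.ne', hcd.ne', nac, nad, nbc, nbd,
        nac.symm, nad.symm, nbc.symm, nbd.symm]
  refine ⟨⟨⟨f, hinj⟩, ?_⟩⟩
  rintro ⟨x1, x2⟩ ⟨y1, y2⟩
  fin_cases x1 <;> fin_cases x2 <;> fin_cases y1 <;> fin_cases y2 <;>
    simp [f, rK2, SimpleGraph.fromRel_adj, Prod.ext_iff, Fin.ext_iff, hab, hcd, hac, had, hbc, hbd,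
      hab.symm, hcd.symm, G.irrefl] <;>
    first
      | decide
      | skip
  <;>
    first
      | exact fun h => hac h.symm
      | exact fun h => had h.symm
      | exact fun h => hbc h.symm
      | exact fun h => hbd h.symm
      | skip

end Builders
section Core

variable {V : Type*} {G : SimpleGraph V}
  (hP4 : ¬ Nonempty (SimpleGraph.pathGraph 4 ↪g G))
  (hK : ¬ Nonempty (rK2 2 ↪g G))

include hP4 hK

lemma pair_adj {B : Set V} {v1 w1 v2 w2 : V}
    (h1 : Forces G B v1 w1) (h2 : Forces G B v2 w2)
    (hw1 : w1 ∉ B) (hw2 : w2 ∉ B) (hne : w1 ≠ w2) : G.Adj w1 w2 := by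
  by_contra hw
  have nb1 : ¬ G.Adj v1 w2 := fun h => hne (h1.2 w2 h hw2).symm
  have nb2 : ¬ G.Adj v2 w1 := fun h => hne (h2.2 w1 h hw1)
  by_cases hv : G.Adj v1 v2
  · -- induced P4 : w1 v1 v2 w2
    have nw1v2 : w1 ≠ v2 := by intro h; subst h; exact hw h2.1
    have nv1w2 : v1 ≠ w2 := by intro h; subst h; exact hw h1.1.symm
    exact hP4 (mkP4 h1.1.symm hv h2.1 (fun h => nb2 h.symm) hw nb1 nw1v2 hne nv1w2)
  · -- induced 2K2 : (v1 w1) (v2 w2)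
    have nv1v2 : v1 ≠ v2 := by intro h; subst h; exact nb1 h2.1
    have nv1w2 : v1 ≠ w2 := by intro h; subst h; exact hw h1.1.symm
    have nw1v2 : w1 ≠ v2 := by intro h; subst h; exact hw h2.1
    exact hK (mk2K2 h1.1 h2.1 hv nb1 (fun h => nb2 h.symm) hw nv1v2 nv1w2 nw1v2 hne)

lemma triple_false {B : Set V} {v1 w1 v2 w2 v3 w3 : V}
    (h1 : Forces G B v1 w1) (h2 : Forces G B v2 w2) (h3 : Forces G B v3 w3)
    (hw1 : w1 ∉ B) (hw2 : w2 ∉ B) (hw3 : w3 ∉ B)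
    (n12 : w1 ≠ w2) (n13 : w1 ≠ w3) (n23 : w2 ≠ w3) : False := by
  have a12 : G.Adj w1 w2 := pair_adj hP4 hK h1 h2 hw1 hw2 n12
  have a13 : G.Adj w1 w3 := pair_adj hP4 hK h1 h3 hw1 hw3 n13
  have a23 : G.Adj w2 w3 := pair_adj hP4 hK h2 h3 hw2 hw3 n23
  have nb21 : ¬ G.Adj v2 w1 := fun h => n12 (h2.2 w1 h hw1)
  have nb23 : ¬ G.Adj v2 w3 := fun h => n23 (h2.2 w3 h hw3).symm
  have nb31 : ¬ G.Adj v3 w1 := fun h => n13 (h3.2 w1 h hw1)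
  have nb32 : ¬ G.Adj v3 w2 := fun h => n23 (h3.2 w2 h hw2)
  have dv2w3 : v2 ≠ w3 := by intro h; subst h; exact nb21 a13.symm
  have dv3w2 : v3 ≠ w2 := by intro h; subst h; exact nb31 a12.symm
  have dv3w1 : v3 ≠ w1 := by intro h; subst h; exact nb32 a12
  have dv2w1 : v2 ≠ w1 := by intro h; subst h; exact nb23 a13
  by_cases hv : G.Adj v2 v3
  · -- P4 : w1 w2 v2 v3
    exact hP4 (mkP4 a12 h2.1.symm hv (fun h => nb21 h.symm) (fun h => nb31 h.symm)
      (fun h => nb32 h.symm) dv2w1.symm dv3w1.symm dv3w2.symm)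
  · -- P4 : v2 w2 w3 v3
    have dv2v3 : v2 ≠ v3 := by
      intro h; exact nb23 (by rw [h]; exact h3.1)
    exact hP4 (mkP4 h2.1 a23 h3.1.symm nb23 hv (fun h => nb32 h.symm) dv2w3 dv2v3 dv3w2.symm)

lemma twostep_false {B B' : Set V} (hBB' : B ⊆ B') {v1 w1 v2 w2 v1' w1' v2' w2' : V}
    (h1 : Forces G B v1 w1) (h2 : Forces G B v2 w2)
    (hw1 : w1 ∉ B) (hw2 : w2 ∉ B) (n : w1 ≠ w2)
    (h1' : Forces G B' v1' w1') (h2' : Forces G B' v2' w2')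
    (hw1' : w1' ∉ B') (hw2' : w2' ∉ B') (n' : w1' ≠ w2')
    (hm1 : w1 ∈ B') (hm2 : w2 ∈ B') : False := by
  have hA : G.Adj w1' w2' := pair_adj hP4 hK h1' h2' hw1' hw2' n'
  have hw1'B : w1' ∉ B := fun h => hw1' (hBB' h)
  have hw2'B : w2' ∉ B := fun h => hw2' (hBB' h)
  have d11 : w1' ≠ w1 := by intro h; rw [h] at hw1'; exact hw1' hm1
  have d12 : w2' ≠ w1 := by intro h; rw [h] at hw2'; exact hw2' hm1
  have d21 : w1' ≠ w2 := by intro h; rw [h] at hw1'; exact hw1' hm2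
  have d22 : w2' ≠ w2 := by intro h; rw [h] at hw2'; exact hw2' hm2
  have nb1w2 : ¬ G.Adj v1 w2 := fun h => n (h1.2 w2 h hw2).symm
  have nb1w1' : ¬ G.Adj v1 w1' := fun h => d11 (h1.2 w1' h hw1'B)
  have nb1w2' : ¬ G.Adj v1 w2' := fun h => d12 (h1.2 w2' h hw2'B)
  have nb2w1 : ¬ G.Adj v2 w1 := fun h => n (h2.2 w1 h hw1)
  have nb2w1' : ¬ G.Adj v2 w1' := fun h => d21 (h2.2 w1' h hw1'B)
  have nb2w2' : ¬ G.Adj v2 w2' := fun h => d22 (h2.2 w2' h hw2'B)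
  have dv1w1' : v1 ≠ w1' := by intro h; subst h; exact nb1w2' hA
  have dv1w2' : v1 ≠ w2' := by intro h; subst h; exact nb1w1' hA.symm
  have dv2w1' : v2 ≠ w1' := by intro h; subst h; exact nb2w2' hA
  have dv2w2' : v2 ≠ w2' := by intro h; subst h; exact nb2w1' hA.symm
  by_cases hv : G.Adj v1 v2
  · -- 2K2 : (v1 v2) (w1' w2')
    exact hK (mk2K2 hv hA nb1w1' nb1w2' nb2w1' nb2w2' dv1w1' dv1w2' dv2w1' dv2w2')
  · by_cases e1 : v1 = w2
    · subst e1
      -- 2K2 : (v2 w2=v1) (w1' w2')  with a=v2 b=v1 c=w1' d=w2'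
      exact hK (mk2K2 h2.1 hA nb2w1' nb2w2' nb1w1' nb1w2' dv2w1' dv2w2' d21.symm d22.symm)
    · by_cases e2 : v2 = w1
      · subst e2
        exact hK (mk2K2 h1.1 hA nb1w1' nb1w2' nb2w1' nb2w2' dv1w1' dv1w2' d11.symm d12.symm)
      · -- P4 : v1 w1 w2 v2
        have hw12 : G.Adj w1 w2 := pair_adj hP4 hK h1 h2 hw1 hw2 n
        have dv1v2 : v1 ≠ v2 := by intro h; subst h; exact nb1w2 h2.1
        exact hP4 (mkP4 h1.1 hw12 h2.1.symm nb1w2 hv (fun h => nb2w1 h.symm) e1 dv1v2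
          (fun h => e2 h.symm))

end Core
section Lower

lemma lower_bound {V : Type*} [Fintype V] {G : SimpleGraph V}
    (hP4 : ¬ Nonempty (SimpleGraph.pathGraph 4 ↪g G))
    (hK : ¬ Nonempty (rK2 2 ↪g G))
    (S : Set V) (hS : IsSkewZFS G S) :
    Fintype.card V ≤ S.ncard + skewPt G S + 1 := by
  classical
  set p := skewPt G S with hp
  have hup : skewIter G S p = Set.univ := Nat.sInf_mem hS
  have hlt : ∀ i < p, skewIter G S i ≠ Set.univ := fun i hi => Nat.notMem_of_lt_sInf hi
  set F : ℕ → ℕ := fun i => ((skewIter G S (i+1)) \ (skewIter G S i)).ncard with hF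
  have hsum : ∀ k, (skewIter G S k).ncard = S.ncard + ∑ i ∈ Finset.range k, F i := by
    intro k; induction k with
    | zero => simp [skewIter]
    | succ k ih =>
      rw [Finset.sum_range_succ, ← Set.ncard_diff_add_ncard_of_subset
        (skewIter_succ_supset G S k) (Set.toFinite _), ih]
      ring
  have hpos : ∀ i < p, 1 ≤ F i := by
    intro i hi
    by_contra h
    have h0 : F i = 0 := by omega
    have heq : skewIter G S (i+1) = skewIter G S i := by
      have hdiff : (skewIter G S (i+1) \ skewIter G S i) = ∅ :=
        (Set.ncard_eq_zero (Set.toFinite _)).mp h0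
      refine subset_antisymm ?_ (skewIter_succ_supset G S i)
      intro x hx
      by_contra hxB
      exact (Set.eq_empty_iff_forall_notMem.mp hdiff x) ⟨hx, hxB⟩
    have hst := skewIter_stab G S heq p (le_of_lt hi)
    exact hlt i hi (hst ▸ hup)
  have hext : ∀ i, 2 ≤ F i → ∃ v1 w1 v2 w2, Forces G (skewIter G S i) v1 w1 ∧
      Forces G (skewIter G S i) v2 w2 ∧ w1 ∉ skewIter G S i ∧ w2 ∉ skewIter G S i ∧
      w1 ≠ w2 ∧ w1 ∈ skewIter G S (i+1) ∧ w2 ∈ skewIter G S (i+1) := by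
    intro i h2
    obtain ⟨a, b, ha, hb, hab⟩ := (Set.one_lt_ncard_iff (Set.toFinite _)).mp
      (show 1 < F i by omega)
    obtain ⟨va, hva⟩ := forces_of_mem_skewStep (B := skewIter G S i) ha.1 ha.2
    obtain ⟨vb, hvb⟩ := forces_of_mem_skewStep (B := skewIter G S i) hb.1 hb.2
    exact ⟨va, a, vb, b, hva, hvb, ha.2, hb.2, hab, ha.1, hb.1⟩
  have hle2 : ∀ i, F i ≤ 2 := by
    intro i
    by_contra h
    obtain ⟨a, b, ha, hb, hab⟩ := (Set.one_lt_ncard_iff (Set.toFinite _)).mp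
      (show 1 < F i by omega)
    have hsub : ({a, b} : Set V) ⊆ (skewIter G S (i+1)) \ (skewIter G S i) := by
      intro x hx; rcases hx with hx | hx
      · exact hx ▸ ha
      · exact hx ▸ hb
    have hcd : ((skewIter G S (i+1) \ skewIter G S i) \ {a, b}).ncard
        = F i - ({a, b} : Set V).ncard := Set.ncard_diff hsub (Set.toFinite _)
    rw [Set.ncard_pair hab] at hcd
    have hne2 : ((skewIter G S (i+1) \ skewIter G S i) \ {a, b}).Nonempty := by
      apply Set.nonempty_of_ncard_ne_zero; omega
    obtain ⟨c, hc⟩ := hne2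
    have hca : c ≠ a := fun h => hc.2 (by simp [h])
    have hcb : c ≠ b := fun h => hc.2 (by simp [h])
    obtain ⟨va, hva⟩ := forces_of_mem_skewStep (B := skewIter G S i) hc.1.1 hc.1.2
    obtain ⟨vb, hvb⟩ := forces_of_mem_skewStep (B := skewIter G S i) ha.1 ha.2
    obtain ⟨vc, hvc⟩ := forces_of_mem_skewStep (B := skewIter G S i) hb.1 hb.2
    exact triple_false hP4 hK hva hvb hvc hc.1.2 ha.2 hb.2 hca hcb hab
  have huniq : ∀ i j, i < j → 2 ≤ F i → 2 ≤ F j → False := by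
    intro i j hij h2i h2j
    obtain ⟨v1, w1, v2, w2, h1, h2, hw1, hw2, n, hm1, hm2⟩ := hext i h2i
    obtain ⟨v1', w1', v2', w2', h1', h2', hw1', hw2', n', _, _⟩ := hext j h2j
    exact twostep_false hP4 hK (skewIter_mono G S (le_of_lt hij)) h1 h2 hw1 hw2 n
      h1' h2' hw1' hw2' n'
      (skewIter_mono G S hij hm1) (skewIter_mono G S hij hm2)
  have hsb : ∑ i ∈ Finset.range p, F i ≤ p + 1 := by
    by_cases hex : ∃ i ∈ Finset.range p, 2 ≤ F i
    · obtain ⟨i0, hi0, h2⟩ := hex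
      have h1all : ∀ j ∈ (Finset.range p).erase i0, F j ≤ 1 := by
        intro j hj
        rcases Nat.lt_or_ge (F j) 2 with h | h
        · omega
        · rcases lt_trichotomy i0 j with hij | hij | hij
          · exact (huniq i0 j hij h2 h).elim
          · exact ((Finset.mem_erase.mp hj).1 hij.symm).elim
          · exact (huniq j i0 hij h h2).elim
      have hsum2 : ∑ j ∈ (Finset.range p).erase i0, F j ≤ ((Finset.range p).erase i0).card * 1 :=
        Finset.sum_le_card_nsmul _ _ 1 h1all
      have hcard : ((Finset.range p).erase i0).card = p - 1 := by
        rw [Finset.card_erase_of_mem hi0, Finset.card_range]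
      have := Finset.add_sum_erase (Finset.range p) F hi0
      have hp1 : 1 ≤ p := by
        have h := Finset.mem_range.mp hi0; omega
      have hFi0 := hle2 i0
      omega
    · push_neg at hex
      calc ∑ i ∈ Finset.range p, F i ≤ (Finset.range p).card * 1 :=
            Finset.sum_le_card_nsmul _ _ 1 (fun j hj => by have := hex j hj; omega)
        _ ≤ p + 1 := by simp
  have hfin : (Set.univ : Set V).ncard = S.ncard + ∑ i ∈ Finset.range p, F i := by
    rw [← hup]; exact hsum p
  rw [Set.ncard_univ, Nat.card_eq_fintype_card] at hfin
  omega

end Lower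
section Final

variable {V : Type*} [Fintype V] {G : SimpleGraph V}

lemma skewTh_nonempty (G : SimpleGraph V) :
    {m | ∃ S : Set V, IsSkewZFS G S ∧ m = S.ncard + skewPt G S}.Nonempty :=
  ⟨_, Set.univ, ⟨0, rfl⟩, rfl⟩

lemma skewTh_of_no_edge (h : ∀ u v, ¬ G.Adj u v) : skewTh G = Fintype.card V := by
  classical
  have hstep : ∀ B : Set V, skewStep G B = B := by
    intro B
    apply subset_antisymm _ (subset_skewStep G B)
    rintro x (hx | ⟨v, hv, -⟩)
    · exact hx
    · exact absurd hv (h v x)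
  have hiter : ∀ (S : Set V) (n : ℕ), skewIter G S n = S := by
    intro S n; induction n with
    | zero => rfl
    | succ n ih => rw [skewIter, ih, hstep]
  have hpt0 : skewPt G (Set.univ : Set V) = 0 :=
    Nat.eq_zero_of_le_zero (Nat.sInf_le (by simp [Set.mem_setOf_eq, hiter]))
  have hmem : Fintype.card V ∈ {m | ∃ S : Set V, IsSkewZFS G S ∧ m = S.ncard + skewPt G S} := by
    refine ⟨Set.univ, ⟨0, rfl⟩, ?_⟩
    rw [hpt0, Set.ncard_univ, Nat.card_eq_fintype_card]
    omega
  have hall : ∀ m ∈ {m | ∃ S : Set V, IsSkewZFS G S ∧ m = S.ncard + skewPt G S},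
      Fintype.card V ≤ m := by
    rintro m ⟨S, ⟨n, hn⟩, rfl⟩
    have hSu : S = Set.univ := by rw [← hiter S n]; exact hn
    subst hSu
    rw [Set.ncard_univ, Nat.card_eq_fintype_card]
    omega
  exact le_antisymm (Nat.sInf_le hmem) (hall _ (Nat.sInf_mem (skewTh_nonempty G)))

lemma skewTh_le_of_edge {u v : V} (huv : G.Adj u v) :
    skewTh G + 1 ≤ Fintype.card V ∧ 2 ≤ Fintype.card V := by
  classical
  set S : Set V := ({u, v} : Set V)ᶜ with hSdef
  have hiter1 : skewIter G S 1 = Set.univ := by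
    apply Set.eq_univ_of_forall
    intro x
    by_cases hx : x ∈ S
    · exact Or.inl hx
    · have hx' : x = u ∨ x = v := by
        by_contra hc
        push_neg at hc
        exact hx (by simp [hSdef, hc.1, hc.2])
      rcases hx' with rfl | rfl
      · refine Or.inr ⟨v, huv.symm, fun y hy hyS => ?_⟩
        have : y = x ∨ y = v := by
          by_contra hc; push_neg at hc
          exact hyS (show y ∈ S by simp [hSdef, hc.1, hc.2])
        rcases this with rfl | rfl
        · rfl
        · exact absurd hy (G.irrefl)
      · refine Or.inr ⟨u, huv, fun y hy hyS => ?_⟩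
        have : y = u ∨ y = x := by
          by_contra hc; push_neg at hc
          exact hyS (show y ∈ S by simp [hSdef, hc.1, hc.2])
        rcases this with rfl | rfl
        · exact absurd hy (G.irrefl)
        · rfl
  have hZ : IsSkewZFS G S := ⟨1, hiter1⟩
  have hpt : skewPt G S ≤ 1 := Nat.sInf_le hiter1
  have hcomp := Set.ncard_add_ncard_compl ({u, v} : Set V)
  rw [Set.ncard_pair huv.ne, Nat.card_eq_fintype_card] at hcomp
  have hth : skewTh G ≤ S.ncard + skewPt G S := Nat.sInf_le ⟨S, hZ, rfl⟩
  rw [← hSdef] at hcomp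
  have hcard2 : 2 ≤ Fintype.card V := by
    have h2 : ({u, v} : Set V).ncard ≤ (Set.univ : Set V).ncard :=
      Set.ncard_le_ncard (Set.subset_univ _) (Set.toFinite _)
    rw [Set.ncard_pair huv.ne, Set.ncard_univ, Nat.card_eq_fintype_card] at h2
    exact h2
  constructor
  · have : S.ncard = Fintype.card V - 2 := by omega
    omega
  · exact hcard2

end Final
section Upper2

variable {V : Type*} [Fintype V] {G : SimpleGraph V}

lemma quad_ncard {a b c d : V} (nab : a ≠ b) (nac : a ≠ c) (nad : a ≠ d)
    (nbc : b ≠ c) (nbd : b ≠ d) (ncd : c ≠ d) :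
    ({a, b, c, d} : Set V).ncard = 4 ∧ 4 ≤ Fintype.card V ∧
      ({a, b, c, d} : Set V).ncard + (({a, b, c, d} : Set V)ᶜ).ncard = Fintype.card V := by
  classical
  have h4 : ({a, b, c, d} : Set V).ncard = 4 := by
    rw [Set.ncard_insert_of_notMem (by simp [nab, nac, nad]),
      Set.ncard_insert_of_notMem (by simp [nbc, nbd]), Set.ncard_pair ncd]
  have hcomp := Set.ncard_add_ncard_compl ({a, b, c, d} : Set V)
  rw [Nat.card_eq_fintype_card] at hcomp
  have hle : ({a, b, c, d} : Set V).ncard ≤ (Set.univ : Set V).ncard :=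
    Set.ncard_le_ncard (Set.subset_univ _) (Set.toFinite _)
  rw [Set.ncard_univ, Nat.card_eq_fintype_card] at hle
  exact ⟨h4, by omega, hcomp⟩

lemma skewTh_le_of_P4 (e : SimpleGraph.pathGraph 4 ↪g G) :
    skewTh G + 2 ≤ Fintype.card V := by
  classical
  set a := e 0 with ha; set b := e 1 with hb; set c := e 2 with hc; set d := e 3 with hd
  have adj : ∀ x y : Fin 4, (SimpleGraph.pathGraph 4).Adj x y → G.Adj (e x) (e y) :=
    fun x y h => e.map_rel_iff.mpr h
  have nadj : ∀ x y : Fin 4, ¬ (SimpleGraph.pathGraph 4).Adj x y → ¬ G.Adj (e x) (e y) :=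
    fun x y h h' => h (e.map_rel_iff.mp h')
  have hab : G.Adj a b := adj 0 1 (by rw [SimpleGraph.pathGraph_adj]; decide)
  have hbc : G.Adj b c := adj 1 2 (by rw [SimpleGraph.pathGraph_adj]; decide)
  have hcd : G.Adj c d := adj 2 3 (by rw [SimpleGraph.pathGraph_adj]; decide)
  have hac : ¬ G.Adj a c := nadj 0 2 (by rw [SimpleGraph.pathGraph_adj]; decide)
  have had : ¬ G.Adj a d := nadj 0 3 (by rw [SimpleGraph.pathGraph_adj]; decide)
  have hbd : ¬ G.Adj b d := nadj 1 3 (by rw [SimpleGraph.pathGraph_adj]; decide)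
  have nac : a ≠ c := fun h => absurd h (e.injective.ne (by decide))
  have nad : a ≠ d := fun h => absurd h (e.injective.ne (by decide))
  have nbd : b ≠ d := fun h => absurd h (e.injective.ne (by decide))
  set S : Set V := ({a, b, c, d} : Set V)ᶜ with hSdef
  have hquad : ∀ y, y ∉ S → y = a ∨ y = b ∨ y = c ∨ y = d := by
    intro y hy
    by_contra hcon; push_neg at hcon
    exact hy (by simp [hSdef, hcon.1, hcon.2.1, hcon.2.2.1, hcon.2.2.2])
  have hbmem : b ∈ skewIter G S 1 := by
    refine Or.inr ⟨a, hab, fun y hy hyS => ?_⟩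
    rcases hquad y hyS with rfl | rfl | rfl | rfl
    · exact absurd hy G.irrefl
    · rfl
    · exact absurd hy hac
    · exact absurd hy had
  have hcmem : c ∈ skewIter G S 1 := by
    refine Or.inr ⟨d, hcd.symm, fun y hy hyS => ?_⟩
    rcases hquad y hyS with rfl | rfl | rfl | rfl
    · exact absurd hy.symm had
    · exact absurd hy.symm hbd
    · rfl
    · exact absurd hy G.irrefl
  have hSsub : S ⊆ skewIter G S 1 := subset_skewStep G S
  have hiter2 : skewIter G S 2 = Set.univ := by
    apply Set.eq_univ_of_forall
    intro x
    by_cases hx1 : x ∈ skewIter G S 1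
    · exact Or.inl hx1
    · have hxS : x ∉ S := fun h => hx1 (hSsub h)
      have hx' : x = a ∨ x = d := by
        rcases hquad x hxS with rfl | rfl | rfl | rfl
        · exact Or.inl rfl
        · exact absurd hbmem hx1
        · exact absurd hcmem hx1
        · exact Or.inr rfl
      rcases hx' with rfl | rfl
      · refine Or.inr ⟨b, hab.symm, fun y hy hy1 => ?_⟩
        rcases hquad y (fun h => hy1 (hSsub h)) with rfl | rfl | rfl | rfl
        · rfl
        · exact absurd hbmem hy1
        · exact absurd hcmem hy1
        · exact absurd hy hbd
      · refine Or.inr ⟨c, hcd, fun y hy hy1 => ?_⟩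
        rcases hquad y (fun h => hy1 (hSsub h)) with rfl | rfl | rfl | rfl
        · exact absurd hy.symm hac
        · exact absurd hbmem hy1
        · exact absurd hcmem hy1
        · rfl
  have hZ : IsSkewZFS G S := ⟨2, hiter2⟩
  have hpt : skewPt G S ≤ 2 := Nat.sInf_le hiter2
  have hth : skewTh G ≤ S.ncard + skewPt G S := Nat.sInf_le ⟨S, hZ, rfl⟩
  obtain ⟨h4, hcard, hcomp⟩ := quad_ncard hab.ne nac nad hbc.ne nbd hcd.ne
  rw [← hSdef] at hcomp
  omega

lemma rk2_adj_iff (x y : Fin 2 × Fin 2) : (rK2 2).Adj x y ↔ x ≠ y ∧ x.1 = y.1 := by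
  constructor
  · rintro ⟨hne, h | h⟩
    · exact ⟨hne, h⟩
    · exact ⟨hne, h.symm⟩
  · rintro ⟨hne, h⟩
    exact ⟨hne, Or.inl h⟩

lemma skewTh_le_of_2K2 (e : rK2 2 ↪g G) :
    skewTh G + 3 ≤ Fintype.card V := by
  classical
  set a := e (0, 0) with ha; set b := e (0, 1) with hb
  set c := e (1, 0) with hc; set d := e (1, 1) with hd
  have adj : ∀ x y : Fin 2 × Fin 2, (rK2 2).Adj x y → G.Adj (e x) (e y) :=
    fun x y h => e.map_rel_iff.mpr h
  have nadj : ∀ x y : Fin 2 × Fin 2, ¬ (rK2 2).Adj x y → ¬ G.Adj (e x) (e y) :=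
    fun x y h h' => h (e.map_rel_iff.mp h')
  have hab : G.Adj a b := adj _ _ ((rk2_adj_iff _ _).mpr (by decide))
  have hcd : G.Adj c d := adj _ _ ((rk2_adj_iff _ _).mpr (by decide))
  have hac : ¬ G.Adj a c := nadj _ _ (fun h => by have := (rk2_adj_iff _ _).mp h; revert this; decide)
  have had : ¬ G.Adj a d := nadj _ _ (fun h => by have := (rk2_adj_iff _ _).mp h; revert this; decide)
  have hbc : ¬ G.Adj b c := nadj _ _ (fun h => by have := (rk2_adj_iff _ _).mp h; revert this; decide)
  have hbd : ¬ G.Adj b d := nadj _ _ (fun h => by have := (rk2_adj_iff _ _).mp h; revert this; decide)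
  have nac : a ≠ c := fun h => absurd h (e.injective.ne (by decide))
  have nad : a ≠ d := fun h => absurd h (e.injective.ne (by decide))
  have nbc : b ≠ c := fun h => absurd h (e.injective.ne (by decide))
  have nbd : b ≠ d := fun h => absurd h (e.injective.ne (by decide))
  set S : Set V := ({a, b, c, d} : Set V)ᶜ with hSdef
  have hquad : ∀ y, y ∉ S → y = a ∨ y = b ∨ y = c ∨ y = d := by
    intro y hy
    by_contra hcon; push_neg at hcon
    exact hy (by simp [hSdef, hcon.1, hcon.2.1, hcon.2.2.1, hcon.2.2.2])
  have hiter1 : skewIter G S 1 = Set.univ := by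
    apply Set.eq_univ_of_forall
    intro x
    by_cases hx : x ∈ S
    · exact Or.inl hx
    · rcases hquad x hx with rfl | rfl | rfl | rfl
      · refine Or.inr ⟨b, hab.symm, fun y hy hyS => ?_⟩
        rcases hquad y hyS with rfl | rfl | rfl | rfl
        · rfl
        · exact absurd hy G.irrefl
        · exact absurd hy hbc
        · exact absurd hy hbd
      · refine Or.inr ⟨a, hab, fun y hy hyS => ?_⟩
        rcases hquad y hyS with rfl | rfl | rfl | rfl
        · exact absurd hy G.irrefl
        · rfl
        · exact absurd hy hac
        · exact absurd hy had
      · refine Or.inr ⟨d, hcd.symm, fun y hy hyS => ?_⟩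
        rcases hquad y hyS with rfl | rfl | rfl | rfl
        · exact absurd hy.symm had
        · exact absurd hy.symm hbd
        · rfl
        · exact absurd hy G.irrefl
      · refine Or.inr ⟨c, hcd, fun y hy hyS => ?_⟩
        rcases hquad y hyS with rfl | rfl | rfl | rfl
        · exact absurd hy.symm hac
        · exact absurd hy.symm hbc
        · exact absurd hy G.irrefl
        · rfl
  have hZ : IsSkewZFS G S := ⟨1, hiter1⟩
  have hpt : skewPt G S ≤ 1 := Nat.sInf_le hiter1
  have hth : skewTh G ≤ S.ncard + skewPt G S := Nat.sInf_le ⟨S, hZ, rfl⟩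
  obtain ⟨h4, hcard, hcomp⟩ := quad_ncard hab.ne nac nad nbc nbd hcd.ne
  rw [← hSdef] at hcomp
  omega

end Upper2
/-- `th₋(G) = n - 1` iff `G` is a cograph (no induced `P₄`) with no
induced `2K₂` and at least one edge. -/
theorem skewTh_eq_card_sub_one_iff {V : Type*} [Fintype V] (G : SimpleGraph V) :
    (skewTh G : ℤ) = (Fintype.card V : ℤ) - 1 ↔
      (¬ Nonempty (SimpleGraph.pathGraph 4 ↪g G) ∧
        ¬ Nonempty (rK2 2 ↪g G) ∧ ∃ u v, G.Adj u v) := by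
  constructor
  · intro hEq
    refine ⟨?_, ?_, ?_⟩
    · rintro ⟨e⟩
      have := skewTh_le_of_P4 e
      omega
    · rintro ⟨e⟩
      have := skewTh_le_of_2K2 e
      omega
    · by_contra hno
      push_neg at hno
      have := skewTh_of_no_edge (G := G) (fun x y => hno x y)
      omega
  · rintro ⟨hP4, hK, u, v, huv⟩
    obtain ⟨hub, hc2⟩ := skewTh_le_of_edge huv
    obtain ⟨S, hZ, hm⟩ := Nat.sInf_mem (skewTh_nonempty G)
    have hth : skewTh G = S.ncard + skewPt G S := hm
    have hlb := lower_bound hP4 hK S hZ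
    omega
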